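/- arXiv:0712.3205 — 2 statements merged into one kernel-verified Lean document; each statement's English description precedes it below -/
import Mathlib

section
/- Let x ∈ ℝ^g satisfy 2x ∈ Λ but x ∉ Λ (i.e., x represents a nonzero two-torsion point of ℝ^g/Λ). Then the maximum defining Θ(x) is attained by at least two distinct lattice elements: there exist μ₁ ≠ μ₂ in Λ with Θ(x) = Q(μ₁,x) − (1/2)Q(μ₁,μ₁) = Q(μ₂,x) − (1/2)Q(μ₂,μ₂). -/
/-- Context: `g ≥ 1`, `Q` a symmetric positive definite bilinear form on `ℝ^g`,
`Λ` the full-rank lattice spanned over `ℤ` by an `ℝ`-basis `b` of `ℝ^g`,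
and `Θ` the tropical theta function `Θ x = sup_{λ ∈ Λ} (Q λ x - Q λ λ / 2)`. -/
theorem tropical_theta_two_torsion_two_maximizers (g : ℕ) (hg : 1 ≤ g)
    (Q : (Fin g → ℝ) →ₗ[ℝ] (Fin g → ℝ) →ₗ[ℝ] ℝ)
    (hQsymm : ∀ x y, Q x y = Q y x)
    (hQpos : ∀ x : Fin g → ℝ, x ≠ 0 → 0 < Q x x)
    (b : Module.Basis (Fin g) ℝ (Fin g → ℝ))
    (Λ : Set (Fin g → ℝ))
    (hΛ : Λ = ((Submodule.span ℤ (Set.range ⇑b) : Submodule ℤ (Fin g → ℝ)) : Set (Fin g → ℝ)))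
    (Θ : (Fin g → ℝ) → ℝ)
    (hΘ : ∀ x, Θ x = sSup ((fun l => Q l x - Q l l / 2) '' Λ))
    (x : Fin g → ℝ) (hx : (2 : ℝ) • x ∈ Λ) (hx' : x ∉ Λ) :
    ∃ μ₁ μ₂ : Fin g → ℝ, μ₁ ∈ Λ ∧ μ₂ ∈ Λ ∧ μ₁ ≠ μ₂ ∧
      Θ x = Q μ₁ x - Q μ₁ μ₁ / 2 ∧ Θ x = Q μ₂ x - Q μ₂ μ₂ / 2 := by
  classical
  set f : (Fin g → ℝ) → ℝ := fun l => Q l x - Q l l / 2 with hf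
  -- invariance of f under the involution l ↦ 2x - l
  have hiv : ∀ l, f ((2 : ℝ) • x - l) = f l := by
    intro l
    simp only [hf, map_sub, map_smul, LinearMap.sub_apply, LinearMap.smul_apply, smul_eq_mul]
    linear_combination hQsymm x l
  have h0Λ : (0 : Fin g → ℝ) ∈ Λ := by rw [hΛ]; exact Submodule.zero_mem _
  have hf0 : f 0 = 0 := by simp [hf]
  -- continuity of v ↦ Q v v
  have hcont : Continuous fun v : Fin g → ℝ => Q v v := by
    have h1 : Continuous fun v : Fin g → ℝ =>
        (LinearMap.toContinuousLinearMap (Q v) : (Fin g → ℝ) →L[ℝ] ℝ) :=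
      ((LinearMap.toContinuousLinearMap.toLinearMap).comp Q).continuous_of_finiteDimensional
    exact h1.clm_apply continuous_id
  -- positive lower bound on the unit sphere
  haveI : Nonempty (Fin g) := ⟨⟨0, hg⟩⟩
  have hsne : (Metric.sphere (0 : Fin g → ℝ) 1).Nonempty :=
    NormedSpace.sphere_nonempty.mpr zero_le_one
  obtain ⟨v₀, hv₀, hmin⟩ := (isCompact_sphere (0 : Fin g → ℝ) 1).exists_isMinOn hsne
    (hcont.continuousOn)
  set c : ℝ := Q v₀ v₀ with hc
  have hv₀ne : v₀ ≠ 0 := by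
    intro h
    rw [h] at hv₀
    simp at hv₀
  have hcpos : 0 < c := hQpos v₀ hv₀ne
  -- coercivity: Q l l ≥ c ‖l‖²
  have hcoer : ∀ l : Fin g → ℝ, c * ‖l‖ ^ 2 ≤ Q l l := by
    intro l
    rcases eq_or_ne l 0 with rfl | hl
    · simp
    · have hn : (0 : ℝ) < ‖l‖ := norm_pos_iff.mpr hl
      have hu : (‖l‖⁻¹ • l) ∈ Metric.sphere (0 : Fin g → ℝ) 1 := by
        simp [norm_smul, abs_of_pos (inv_pos.mpr hn), inv_mul_cancel₀ hn.ne']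
      have h2 : c ≤ Q (‖l‖⁻¹ • l) (‖l‖⁻¹ • l) := hmin hu
      have hlu : l = ‖l‖ • (‖l‖⁻¹ • l) := by
        rw [smul_smul, mul_inv_cancel₀ hn.ne', one_smul]
      calc c * ‖l‖ ^ 2 ≤ Q (‖l‖⁻¹ • l) (‖l‖⁻¹ • l) * ‖l‖ ^ 2 := by
            nlinarith [sq_nonneg ‖l‖]
        _ = Q (‖l‖ • (‖l‖⁻¹ • l)) (‖l‖ • (‖l‖⁻¹ • l)) := by
            simp only [map_smul, LinearMap.smul_apply, smul_eq_mul]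
            ring
        _ = Q l l := by rw [← hlu]
  -- linear bound on l ↦ Q l x
  set L : (Fin g → ℝ) →L[ℝ] ℝ := LinearMap.toContinuousLinearMap (Q.flip x) with hL
  have hLx : ∀ l, Q l x = L l := by intro l; simp [hL]
  have hLb : ∀ l, Q l x ≤ ‖L‖ * ‖l‖ := by
    intro l
    rw [hLx l]
    exact (le_abs_self _).trans (by rw [← Real.norm_eq_abs]; exact L.le_opNorm l)
  -- the set of lattice points with f ≥ 0 is finite
  set R : ℝ := 2 * ‖L‖ / c with hR
  have hball : ∀ l, 0 ≤ f l → ‖l‖ ≤ R := by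
    intro l hfl
    have h1 : c * ‖l‖ ^ 2 / 2 ≤ ‖L‖ * ‖l‖ := by
      have := hcoer l
      have := hLb l
      simp only [hf] at hfl
      nlinarith
    rw [hR, le_div_iff₀ hcpos]
    rcases eq_or_lt_of_le (norm_nonneg l) with h0 | hn
    · rw [← h0]
      simp only [zero_mul]
      positivity
    · have h2 : (‖l‖ * c) * ‖l‖ ≤ (2 * ‖L‖) * ‖l‖ := by nlinarith
      exact le_of_mul_le_mul_right h2 hn
  have hTsub : {l ∈ Λ | 0 ≤ f l} ⊆ Metric.closedBall 0 R ∩ Λ := by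
    rintro l ⟨hlΛ, hfl⟩
    exact ⟨mem_closedBall_zero_iff.mpr (hball l hfl), hlΛ⟩
  have hfin : Set.Finite (Metric.closedBall (0 : Fin g → ℝ) R ∩ Λ) := by
    rw [hΛ]
    change ((_ : Set (Fin g → ℝ)) ∩
      (Submodule.span ℤ (Set.range ⇑b)).toAddSubgroup).Finite
    haveI : DiscreteTopology ((Submodule.span ℤ (Set.range ⇑b)).toAddSubgroup) :=
      inferInstanceAs <| DiscreteTopology (Submodule.span ℤ (Set.range ⇑b))
    exact Metric.finite_isBounded_inter_isClosed DiscreteTopology.isDiscrete Metric.isBounded_closedBall inferInstance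
  have hTfin : Set.Finite {l ∈ Λ | 0 ≤ f l} := hfin.subset hTsub
  have hTne : {l ∈ Λ | 0 ≤ f l}.Nonempty := ⟨0, h0Λ, by rw [hf0]⟩
  obtain ⟨μ, hμT, hμmax⟩ := Set.exists_max_image _ f hTfin hTne
  have hμΛ : μ ∈ Λ := hμT.1
  have hμge : ∀ l ∈ Λ, f l ≤ f μ := by
    intro l hl
    rcases le_or_gt 0 (f l) with h | h
    · exact hμmax l ⟨hl, h⟩
    · have h0 : f 0 ≤ f μ := hμmax 0 ⟨h0Λ, le_of_eq hf0.symm⟩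
      rw [hf0] at h0
      linarith
  -- the sup is attained at μ
  have hgr : IsGreatest (f '' Λ) (f μ) := by
    constructor
    · exact Set.mem_image_of_mem f hμΛ
    · rintro y ⟨l, hl, rfl⟩
      exact hμge l hl
  have hΘμ : Θ x = f μ := by rw [hΘ x, ← hf]; exact hgr.csSup_eq
  -- the second maximizer
  refine ⟨μ, (2 : ℝ) • x - μ, hμΛ, ?_, ?_, hΘμ, by rw [hΘμ, ← hiv μ]⟩
  · rw [hΛ] at hx hμΛ ⊢
    exact Submodule.sub_mem _ hx hμΛ
  · intro h
    apply hx'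
    have h3 : μ + μ = (2 : ℝ) • x := eq_sub_iff_add_eq.mp h
    have h2 : (2 : ℝ) • x = (2 : ℝ) • μ := by rw [← h3, two_smul]
    have hxμ : x = μ := smul_right_injective _ (by norm_num : (2 : ℝ) ≠ 0) h2
    rwa [hxμ]
end

section
/- Let x ∈ ℝ^g satisfy 2x ∈ Λ but x ∉ Λ. Then Θ is not differentiable at x; that is, every nonzero two-torsion point of the torus ℝ^g/Λ lies in the corner locus of Θ (the theta divisor). -/
/-- Context: `g ≥ 1`, `Q` a symmetric positive definite bilinear form on `ℝ^g`,
`Λ` the full-rank lattice spanned over `ℤ` by an `ℝ`-basis `b` of `ℝ^g`,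
and `Θ` the tropical theta function `Θ x = sup_{λ ∈ Λ} (Q λ x - Q λ λ / 2)`. -/
theorem tropical_theta_two_torsion_in_corner_locus (g : ℕ) (hg : 1 ≤ g)
    (Q : (Fin g → ℝ) →ₗ[ℝ] (Fin g → ℝ) →ₗ[ℝ] ℝ)
    (hQsymm : ∀ x y, Q x y = Q y x)
    (hQpos : ∀ x : Fin g → ℝ, x ≠ 0 → 0 < Q x x)
    (b : Module.Basis (Fin g) ℝ (Fin g → ℝ))
    (Λ : Set (Fin g → ℝ))
    (hΛ : Λ = ((Submodule.span ℤ (Set.range ⇑b) : Submodule ℤ (Fin g → ℝ)) : Set (Fin g → ℝ)))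
    (Θ : (Fin g → ℝ) → ℝ)
    (hΘ : ∀ x, Θ x = sSup ((fun l => Q l x - Q l l / 2) '' Λ))
    (x : Fin g → ℝ) (hx : (2 : ℝ) • x ∈ Λ) (hx' : x ∉ Λ) :
    ¬ DifferentiableAt ℝ Θ x := by
  classical
  have hQnn : ∀ v, 0 ≤ Q v v := by
    intro v
    rcases eq_or_ne v 0 with h | h
    · simp [h]
    · exact (hQpos v h).le
  -- key algebraic identity
  have key : ∀ l y : Fin g → ℝ, Q l y - Q l l / 2 = Q y y / 2 - Q (l - y) (l - y) / 2 := by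
    intro l y
    have e : Q (l - y) (l - y) = Q l l - Q l y - (Q y l - Q y y) := by
      simp only [map_sub, LinearMap.sub_apply]
      ring
    rw [hQsymm y l] at e
    linarith
  -- Λ is closed
  haveI : Nonempty (Fin g) := ⟨⟨0, hg⟩⟩
  have hclosed : IsClosed Λ := by
    rw [hΛ]
    have := AddSubgroup.isClosed_of_discrete
      (H := (Submodule.span ℤ (Set.range ⇑b)).toAddSubgroup)
    simpa using this
  haveI : DiscreteTopology Λ := by
    rw [hΛ]
    exact inferInstanceAs (DiscreteTopology (Submodule.span ℤ (Set.range ⇑b)))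
  -- continuity of v ↦ Q v v
  have hQc : Continuous fun v : Fin g → ℝ => LinearMap.toContinuousLinearMap (Q v) := by
    let Qc : (Fin g → ℝ) →ₗ[ℝ] ((Fin g → ℝ) →L[ℝ] ℝ) :=
      { toFun := fun v => LinearMap.toContinuousLinearMap (Q v)
        map_add' := fun u v => by ext w; simp
        map_smul' := fun c v => by ext w; simp }
    exact Qc.continuous_of_finiteDimensional
  have hcont : Continuous fun v : Fin g → ℝ => Q v v := by
    have : Continuous fun v : Fin g → ℝ =>
        (fun p : (((Fin g → ℝ)) →L[ℝ] ℝ) × (Fin g → ℝ) => p.1 p.2)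
          ((LinearMap.toContinuousLinearMap (Q v)), v) :=
      (isBoundedBilinearMap_apply.continuous).comp (hQc.prodMk continuous_id)
    simpa using this
  -- coercivity
  obtain ⟨c, hc0, hcle⟩ : ∃ c > 0, ∀ v : Fin g → ℝ, c * ‖v‖ ^ 2 ≤ Q v v := by
    have hsne : (Metric.sphere (0 : Fin g → ℝ) 1).Nonempty :=
      NormedSpace.sphere_nonempty.2 zero_le_one
    obtain ⟨v0, hv0, hminS⟩ :=
      (isCompact_sphere (0 : Fin g → ℝ) 1).exists_isMinOn hsne hcont.continuousOn
    have hv0n : ‖v0‖ = 1 := by simpa using hv0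
    have hv0ne : v0 ≠ 0 := by
      intro h; rw [h] at hv0n; simp at hv0n
    refine ⟨Q v0 v0, hQpos v0 hv0ne, fun v => ?_⟩
    rcases eq_or_ne v 0 with h | h
    · simp [h]
    · have hn : ‖v‖ ≠ 0 := norm_ne_zero_iff.2 h
      have hu : (‖v‖⁻¹ • v) ∈ Metric.sphere (0 : Fin g → ℝ) 1 := by
        simp [norm_smul, abs_of_nonneg (inv_nonneg.2 (norm_nonneg v)), inv_mul_cancel₀ hn]
      have hval : Q (‖v‖⁻¹ • v) (‖v‖⁻¹ • v) = ‖v‖⁻¹ * (‖v‖⁻¹ * Q v v) := by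
        simp [map_smul]
      have hle : Q v0 v0 ≤ ‖v‖⁻¹ * (‖v‖⁻¹ * Q v v) := by
        have := hminS hu
        simpa [hval] using this
      have hpos : (0:ℝ) < ‖v‖ := norm_pos_iff.2 h
      have h2 : Q v0 v0 * ‖v‖ ^ 2 ≤ Q v v := by
        calc Q v0 v0 * ‖v‖ ^ 2 = ‖v‖ ^ 2 * Q v0 v0 := by ring
          _ ≤ ‖v‖ ^ 2 * (‖v‖⁻¹ * (‖v‖⁻¹ * Q v v)) :=
            mul_le_mul_of_nonneg_left hle (by positivity)
          _ = Q v v := by field_simp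
      linarith
  -- minimizer of f v = Q (v - x) (v - x) over Λ
  set f : (Fin g → ℝ) → ℝ := fun v => Q (v - x) (v - x) with hf
  have hfc : Continuous f := hcont.comp (continuous_id.sub continuous_const)
  have h0Λ : (0 : Fin g → ℝ) ∈ Λ := by rw [hΛ]; exact Submodule.zero_mem _
  set R : ℝ := Real.sqrt (f 0 / c) with hR
  have hball : ∀ v, f v ≤ f 0 → dist v x ≤ R := by
    intro v hv
    have h1 : c * ‖v - x‖ ^ 2 ≤ f 0 := le_trans (hcle (v - x)) hv
    have h2 : ‖v - x‖ ^ 2 ≤ f 0 / c := by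
      rw [le_div_iff₀ hc0]; linarith
    have := Real.sqrt_le_sqrt h2
    rw [Real.sqrt_sq (norm_nonneg _)] at this
    rwa [dist_eq_norm]
  have hTfin : (Metric.closedBall x R ∩ Λ).Finite :=
    Metric.finite_isBounded_inter_isClosed DiscreteTopology.isDiscrete Metric.isBounded_closedBall hclosed
  have h0T : (0 : Fin g → ℝ) ∈ Metric.closedBall x R ∩ Λ := by
    refine ⟨?_, h0Λ⟩
    rw [Metric.mem_closedBall]
    exact hball 0 le_rfl
  obtain ⟨l0, hl0T', hl0min⟩ := Finset.exists_min_image hTfin.toFinset f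
    ⟨0, hTfin.mem_toFinset.2 h0T⟩
  have hl0T : l0 ∈ Metric.closedBall x R ∩ Λ := hTfin.mem_toFinset.1 hl0T'
  have hl0Λ : l0 ∈ Λ := hl0T.2
  have hl0glob : ∀ l ∈ Λ, f l0 ≤ f l := by
    intro l hl
    by_cases hcase : f l ≤ f 0
    · exact hl0min l (hTfin.mem_toFinset.2 ⟨Metric.mem_closedBall.2 (hball l hcase), hl⟩)
    · exact le_trans (hl0min 0 (hTfin.mem_toFinset.2 h0T)) (le_of_not_ge hcase)
  -- the mirror lattice point
  set l1 : Fin g → ℝ := (2 : ℝ) • x - l0 with hl1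
  have hl1Λ : l1 ∈ Λ := by
    rw [hΛ] at hx hl0Λ ⊢
    exact Submodule.sub_mem _ hx hl0Λ
  have hfl1 : f l1 = f l0 := by
    have : l1 - x = -(l0 - x) := by
      rw [hl1]; rw [two_smul]; abel
    show Q (l1 - x) (l1 - x) = Q (l0 - x) (l0 - x)
    rw [this]
    simp only [map_neg, LinearMap.neg_apply, map_sub, LinearMap.sub_apply, neg_sub, neg_neg]
    ring
  have hne : l0 ≠ l1 := by
    intro h
    apply hx'
    have : (2:ℝ) • l0 = (2:ℝ) • x := by
      rw [two_smul]
      nth_rewrite 2 [h]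
      rw [hl1]; abel
    have hx0 : l0 = x := by
      have := congrArg (fun v => (2:ℝ)⁻¹ • v) this
      simpa [smul_smul] using this
    rwa [← hx0]
  -- bddAbove and nonempty of image sets
  have hbdd : ∀ y, BddAbove ((fun l => Q l y - Q l l / 2) '' Λ) := by
    intro y
    refine ⟨Q y y / 2, ?_⟩
    rintro z ⟨l, _, rfl⟩
    dsimp only
    rw [key]
    linarith [hQnn (l - y)]
  have hΘge : ∀ y, ∀ l ∈ Λ, Q l y - Q l l / 2 ≤ Θ y := by
    intro y l hl
    rw [hΘ]
    exact le_csSup (hbdd y) ⟨l, hl, rfl⟩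
  have hΘx : ∀ l ∈ Λ, f l = f l0 → Θ x = Q l x - Q l l / 2 := by
    intro l hl hfl
    refine le_antisymm ?_ (hΘge x l hl)
    rw [hΘ]
    apply csSup_le (Set.Nonempty.image _ ⟨0, h0Λ⟩)
    rintro z ⟨m, hm, rfl⟩
    dsimp only
    rw [key, key]
    have := hl0glob m hm
    rw [← hfl] at this
    simp only [hf] at this
    linarith
  -- differentiability contradiction
  intro hd
  have hL : ∀ l ∈ Λ, f l = f l0 →
      fderiv ℝ Θ x = LinearMap.toContinuousLinearMap (Q l) := by
    intro l hl hfl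
    set L : (Fin g → ℝ) →L[ℝ] ℝ := LinearMap.toContinuousLinearMap (Q l) with hLdef
    have hF : HasFDerivAt (fun y => Θ y - (Q l y - Q l l / 2))
        (fderiv ℝ Θ x - L) x := by
      have h1 : HasFDerivAt (fun y => Q l y - Q l l / 2) L x := by
        have := (L.hasFDerivAt (x := x)).sub_const (Q l l / 2)
        simp at this ⊢
        exact this
      exact hd.hasFDerivAt.sub h1
    have hmin : IsLocalMin (fun y => Θ y - (Q l y - Q l l / 2)) x := by
      apply Filter.Eventually.of_forall
      intro y
      have h1 := hΘge y l hl
      have h2 := hΘx l hl hfl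
      simp only []
      linarith
    have := hmin.hasFDerivAt_eq_zero hF
    rw [sub_eq_zero] at this
    exact this
  have heq : LinearMap.toContinuousLinearMap (Q l0) = LinearMap.toContinuousLinearMap (Q l1) := by
    rw [← hL l0 hl0Λ rfl, hL l1 hl1Λ hfl1]
  have hd0 : l0 - l1 ≠ 0 := sub_ne_zero.2 hne
  have happ : Q l0 (l0 - l1) = Q l1 (l0 - l1) := by
    have := DFunLike.congr_fun heq (l0 - l1)
    simpa using this
  have : Q (l0 - l1) (l0 - l1) = 0 := by
    simp only [map_sub, LinearMap.sub_apply] at happ ⊢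
    linarith [hQsymm l0 l1]
  exact absurd this (ne_of_gt (hQpos _ hd0))
end
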